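/- arXiv:1509.00311 — 9 statements merged into one kernel-verified Lean document; each statement's English description precedes it below -/
import Mathlib

section
/- Let G₁ be a matrix block of dimension k₁ × k_m and length n₁ which is left orthogonal (⟨G₁ᵀ, G₁⟩ = I), and let G₂, H₂ be matrix blocks of dimension k_m × k₂ and length n₂. Then ⟨(G₁ ⊗ G₂)ᵀ, G₁ ⊗ H₂⟩ = ⟨G₂ᵀ, H₂⟩. -/
open Matrix

/-- **Orthogonality of Kronecker products (left-orthogonal case).**
If the matrix block `G₁` (dimension `k₁ × km`, length `n₁`) is left orthogonal,
i.e. `⟨G₁ᵀ, G₁⟩ = I`, and `G₂, H₂` are matrix blocks of dimension `km × k₂` and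
length `n₂`, then `⟨(G₁ ⊗ G₂)ᵀ, G₁ ⊗ H₂⟩ = ⟨G₂ᵀ, H₂⟩`. -/
theorem scalarProduct_kroneckerProduct_of_leftOrthogonal
    (k₁ km k₂ n₁ n₂ : ℕ)
    (G₁ : Fin n₁ → Matrix (Fin k₁) (Fin km) ℝ)
    (G₂ H₂ : Fin n₂ → Matrix (Fin km) (Fin k₂) ℝ)
    (hG₁ : ∑ i₁ : Fin n₁, (G₁ i₁)ᵀ * G₁ i₁ = 1) :
    ∑ i : Fin n₁ × Fin n₂, (G₁ i.1 * G₂ i.2)ᵀ * (G₁ i.1 * H₂ i.2)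
      = ∑ i₂ : Fin n₂, (G₂ i₂)ᵀ * H₂ i₂ := by
  rw [Fintype.sum_prod_type_right]
  refine Finset.sum_congr rfl fun i₂ _ => ?_
  calc ∑ i₁ : Fin n₁, (G₁ i₁ * G₂ i₂)ᵀ * (G₁ i₁ * H₂ i₂)
      = (G₂ i₂)ᵀ * (∑ i₁ : Fin n₁, (G₁ i₁)ᵀ * G₁ i₁) * H₂ i₂ := by
        simp only [Matrix.mul_sum, Matrix.sum_mul, transpose_mul, Matrix.mul_assoc]
    _ = (G₂ i₂)ᵀ * H₂ i₂ := by rw [hG₁, Matrix.mul_one]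
end

section
/- Let G₂ be a matrix block of dimension k_m × k₂ and length n₂ which is right orthogonal (⟨G₂, G₂ᵀ⟩ = I), and let G₁, H₁ be matrix blocks of dimension k₁ × k_m and length n₁. Then ⟨G₁ ⊗ G₂, (H₁ ⊗ G₂)ᵀ⟩ = ⟨G₁, H₁ᵀ⟩. -/
open Matrix

/-- **Orthogonality of Kronecker products (right-orthogonal case).**
If the matrix block `G₂` (dimension `km × k₂`, length `n₂`) is right orthogonal,
i.e. `⟨G₂, G₂ᵀ⟩ = I`, and `G₁, H₁` are matrix blocks of dimension `k₁ × km` and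
length `n₁`, then `⟨G₁ ⊗ G₂, (H₁ ⊗ G₂)ᵀ⟩ = ⟨G₁, H₁ᵀ⟩`. -/
theorem scalarProduct_kroneckerProduct_of_rightOrthogonal
    (k₁ km k₂ n₁ n₂ : ℕ)
    (G₁ H₁ : Fin n₁ → Matrix (Fin k₁) (Fin km) ℝ)
    (G₂ : Fin n₂ → Matrix (Fin km) (Fin k₂) ℝ)
    (hG₂ : ∑ i₂ : Fin n₂, G₂ i₂ * (G₂ i₂)ᵀ = 1) :
    ∑ i : Fin n₁ × Fin n₂, (G₁ i.1 * G₂ i.2) * (H₁ i.1 * G₂ i.2)ᵀ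
      = ∑ i₁ : Fin n₁, G₁ i₁ * (H₁ i₁)ᵀ := by
  rw [Fintype.sum_prod_type]
  refine Finset.sum_congr rfl fun i₁ _ => ?_
  calc ∑ i₂ : Fin n₂, (G₁ i₁ * G₂ i₂) * (H₁ i₁ * G₂ i₂)ᵀ
      = G₁ i₁ * (∑ i₂ : Fin n₂, G₂ i₂ * (G₂ i₂)ᵀ) * (H₁ i₁)ᵀ := by
        conv_rhs => rw [Matrix.mul_sum, Matrix.sum_mul]
        simp [Matrix.transpose_mul, Matrix.mul_assoc]
    _ = G₁ i₁ * (H₁ i₁)ᵀ := by simp [hG₂]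
end

section
/- Let G₁, …, G_m be matrix blocks with G_μ of dimension r_{μ-1} × r_μ and length n_μ, and let H₁, …, H_m be matrix blocks with H_μ of dimension r'_{μ-1} × r'_μ and length n_μ, where r₀ = r'₀. Define the matrices L_s := ⟨(G₁ ⊗ … ⊗ G_{s-1})ᵀ, H₁ ⊗ … ⊗ H_{s-1}⟩ ∈ ℝ^{r_{s-1} × r'_{s-1}} for s = 2, …, m+1, and L₁ := I (the r₀ × r₀ identity). Then for every s with 2 ≤ s ≤ m+1, L_s = ⟨G_{s-1}ᵀ, L_{s-1}, H_{s-1}⟩ = ∑_i G_{s-1}(i)ᵀ L_{s-1} H_{s-1}(i), i.e. the Gram-type matrices L_s can be computed by this successive recursion. -/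
open Matrix

/-- The (ordered) Kronecker product `G₁ ⊗ … ⊗ G_s` of the first `s` matrix blocks of a
family of matrix blocks `G`, where `G μ` has dimension `r μ × r (μ+1)` and length `n μ`.
It is a matrix block of dimension `r 0 × r s`, indexed by tuples `(i₁,…,i_s)`;
the empty product is the (length-one) identity block. -/
def blockProd {r n : ℕ → ℕ}
    (G : ∀ μ : ℕ, Fin (n μ) → Matrix (Fin (r μ)) (Fin (r (μ + 1))) ℝ) :
    (s : ℕ) → ((μ : Fin s) → Fin (n μ.val)) → Matrix (Fin (r 0)) (Fin (r s)) ℝ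
  | 0, _ => 1
  | s + 1, i =>
      blockProd G s (fun μ => i ⟨μ.val, Nat.lt_succ_of_lt μ.isLt⟩) *
        G s (i ⟨s, Nat.lt_succ_self s⟩)

/-- **Successive computation of the Gram-type matrices (Lemma "Successive computing").**
Given matrix blocks `G μ` of dimension `rG μ × rG (μ+1)` and `H μ` of dimension
`rH μ × rH (μ+1)`, both of length `n μ`, with `rG 0 = rH 0`, define
`L s := ⟨(G₁ ⊗ … ⊗ G_s)ᵀ, H₁ ⊗ … ⊗ H_s⟩` (the middle dimensions `rG 0` and `rH 0`
being identified via the rectangular identity matrix `J`).  Then `L 0 = J` and the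
matrices `L` satisfy the successive recursion
`L (s+1) = ⟨(G s)ᵀ, L s, H s⟩ = ∑ j, (G s j)ᵀ * L s * H s j` for all `s < m`. -/
theorem gram_succ_recursion
    (m : ℕ) (rG rH n : ℕ → ℕ) (h0 : rG 0 = rH 0)
    (G : ∀ μ : ℕ, Fin (n μ) → Matrix (Fin (rG μ)) (Fin (rG (μ + 1))) ℝ)
    (H : ∀ μ : ℕ, Fin (n μ) → Matrix (Fin (rH μ)) (Fin (rH (μ + 1))) ℝ)
    (J : Matrix (Fin (rG 0)) (Fin (rH 0)) ℝ)
    (hJ : J = Matrix.of fun (a : Fin (rG 0)) (b : Fin (rH 0)) => if (a : ℕ) = (b : ℕ) then (1 : ℝ) else 0)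
    (L : ∀ s : ℕ, Matrix (Fin (rG s)) (Fin (rH s)) ℝ)
    (hL : ∀ s : ℕ, L s = ∑ i : ((μ : Fin s) → Fin (n μ.val)),
        (blockProd G s i)ᵀ * J * blockProd H s i) :
    L 0 = J ∧
      ∀ s : ℕ, s < m → L (s + 1) = ∑ j : Fin (n s), (G s j)ᵀ * L s * H s j := by
  constructor
  · rw [hL 0]
    simp [blockProd]
  · intro s _
    rw [hL (s + 1), hL s, ← Equiv.sum_comp (Fin.snocEquiv (fun μ : Fin (s + 1) => Fin (n μ.val))),
      Fintype.sum_prod_type]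
    refine Finset.sum_congr rfl fun j _ => ?_
    rw [Matrix.mul_sum, Matrix.sum_mul]
    refine Finset.sum_congr rfl fun i _ => ?_
    have e1 : (fun μ : Fin s => (Fin.snocEquiv (fun μ : Fin (s + 1) => Fin (n μ.val)) (j, i))
        ⟨μ.val, Nat.lt_succ_of_lt μ.isLt⟩) = i := by
      funext μ
      rw [Fin.snocEquiv_apply]
      exact Fin.snoc_castSucc (α := fun μ : Fin (s+1) => Fin (n μ.val)) (p := i) (x := j) (i := μ)
    have e2 : (Fin.snocEquiv (fun μ : Fin (s + 1) => Fin (n μ.val)) (j, i))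
        ⟨s, Nat.lt_succ_self s⟩ = j := by
      rw [Fin.snocEquiv_apply]
      exact Fin.snoc_last (α := fun μ : Fin (s+1) => Fin (n μ.val)) (p := i) (x := j)
    show (blockProd G (s+1) _)ᵀ * J * blockProd H (s+1) _ = _
    rw [blockProd, blockProd, e1, e2, transpose_mul]
    simp only [Matrix.mul_assoc]
end

section
/- Let G₁, …, G_m be matrix blocks with G_μ of dimension r_{μ-1} × r_μ and length n_μ, and suppose each G_μ is left orthogonal, i.e. ⟨G_μᵀ, G_μ⟩ = I, and r₀ = 1. Then the Kronecker product G₁ ⊗ … ⊗ G_m is left orthogonal, i.e. ⟨(G₁ ⊗ … ⊗ G_m)ᵀ, G₁ ⊗ … ⊗ G_m⟩ = ∑_{i₁,…,i_m} (G₁(i₁)⋯G_m(i_m))ᵀ (G₁(i₁)⋯G_m(i_m)) = I (the r_m × r_m identity matrix). -/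
open Matrix

/-- **Left orthogonality of Kronecker products.**
If each matrix block `G μ` (dimension `r μ × r (μ+1)`, length `n μ`, for `μ < m`) is
left orthogonal, i.e. `⟨(G μ)ᵀ, G μ⟩ = I`, and `r 0 = 1`, then the Kronecker product
`G₁ ⊗ … ⊗ G_m` is left orthogonal:
`∑_{i₁,…,i_m} (G₁(i₁)⋯G_m(i_m))ᵀ (G₁(i₁)⋯G_m(i_m)) = I` (the `r m × r m` identity). -/
theorem kroneckerProd_leftOrthogonal
    (m : ℕ) (r n : ℕ → ℕ) (hr0 : r 0 = 1)
    (G : ∀ μ : ℕ, Fin (n μ) → Matrix (Fin (r μ)) (Fin (r (μ + 1))) ℝ)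
    (horth : ∀ μ : ℕ, μ < m → ∑ j : Fin (n μ), (G μ j)ᵀ * G μ j = 1) :
    ∑ i : ((μ : Fin m) → Fin (n μ.val)),
      (blockProd G m i)ᵀ * blockProd G m i = 1 := by
  induction m with
  | zero => simp [blockProd]
  | succ s ih =>
    have key : ∑ i : ((μ : Fin (s+1)) → Fin (n μ.val)),
        (blockProd G (s+1) i)ᵀ * blockProd G (s+1) i
        = ∑ p : Fin (n s) × ((μ : Fin s) → Fin (n μ.val)),
            (blockProd G s p.2 * G s p.1)ᵀ * (blockProd G s p.2 * G s p.1) := by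
      refine (Fintype.sum_equiv (Fin.snocEquiv (fun μ : Fin (s+1) => Fin (n μ.val)))
        _ _ ?_).symm
      rintro ⟨j, i⟩
      have hc : ∀ μ : Fin s,
          (Fin.snoc i j : ∀ μ : Fin (s+1), Fin (n μ.val)) ⟨μ.val, Nat.lt_succ_of_lt μ.isLt⟩
            = i μ := by
        intro μ
        show (Fin.snoc i j : ∀ μ : Fin (s+1), Fin (n μ.val)) μ.castSucc = i μ
        exact Fin.snoc_castSucc (α := fun μ : Fin (s+1) => Fin (n μ.val)) (p := i) (x := j) (i := μ)
      have hl : (Fin.snoc i j : ∀ μ : Fin (s+1), Fin (n μ.val)) ⟨s, Nat.lt_succ_self s⟩ = j := by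
        show (Fin.snoc i j : ∀ μ : Fin (s+1), Fin (n μ.val)) (Fin.last s) = j
        exact Fin.snoc_last (α := fun μ : Fin (s+1) => Fin (n μ.val)) (x := j) (p := i)
      simp only [Fin.snocEquiv, Equiv.coe_fn_mk, blockProd, hc, hl]
    rw [key, Fintype.sum_prod_type]
    have h2 : ∀ j : Fin (n s),
        ∑ i : ((μ : Fin s) → Fin (n μ.val)),
          (blockProd G s i * G s j)ᵀ * (blockProd G s i * G s j)
        = (G s j)ᵀ * G s j := by
      intro j
      have : ∀ i : ((μ : Fin s) → Fin (n μ.val)),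
          (blockProd G s i * G s j)ᵀ * (blockProd G s i * G s j)
          = (G s j)ᵀ * ((blockProd G s i)ᵀ * blockProd G s i) * G s j := by
        intro i; rw [transpose_mul]; simp only [Matrix.mul_assoc]
      simp_rw [this]
      rw [← Matrix.sum_mul, ← Matrix.mul_sum,
        ih (fun μ h => horth μ (h.trans (Nat.lt_succ_self s))), Matrix.mul_one]
    simp_rw [h2]
    exact horth s (Nat.lt_succ_self s)
end

section
/- Let G₁, …, G_m be matrix blocks with G_μ of dimension r_{μ-1} × r_μ and length n_μ, and suppose each G_μ is right orthogonal, i.e. ⟨G_μ, G_μᵀ⟩ = I, and r_m = 1. Then the Kronecker product G₁ ⊗ … ⊗ G_m is right orthogonal, i.e. ⟨G₁ ⊗ … ⊗ G_m, (G₁ ⊗ … ⊗ G_m)ᵀ⟩ = ∑_{i₁,…,i_m} (G₁(i₁)⋯G_m(i_m)) (G₁(i₁)⋯G_m(i_m))ᵀ = I (the r₀ × r₀ identity matrix). -/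
open Matrix

lemma blockProd_orth_aux {r n : ℕ → ℕ}
    (G : ∀ μ : ℕ, Fin (n μ) → Matrix (Fin (r μ)) (Fin (r (μ + 1))) ℝ) :
    ∀ s : ℕ, (∀ μ : ℕ, μ < s → ∑ j : Fin (n μ), G μ j * (G μ j)ᵀ = 1) →
      ∑ i : ((μ : Fin s) → Fin (n μ.val)),
        blockProd G s i * (blockProd G s i)ᵀ = 1 := by
  intro s
  induction s with
  | zero =>
    intro _
    simp [blockProd]
  | succ s ih =>
    intro h
    rw [← Equiv.sum_comp (Fin.snocEquiv (fun μ : Fin (s + 1) => Fin (n μ.val))),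
      Fintype.sum_prod_type_right]
    set e := Fin.snocEquiv (fun μ : Fin (s + 1) => Fin (n μ.val)) with he
    have key : ∀ (j : (μ : Fin s) → Fin (n μ.val)),
        ∑ k : Fin (n s),
          blockProd G (s + 1) (e (k, j)) * (blockProd G (s + 1) (e (k, j)))ᵀ
        = blockProd G s j * (blockProd G s j)ᵀ := by
      intro j
      have hprod : ∀ k : Fin (n s),
          blockProd G (s + 1) (e (k, j)) = blockProd G s j * G s k := by
        intro k
        show blockProd G s _ * G s _ = _
        have h1 : (fun μ : Fin s =>
            e (k, j) ⟨μ.val, Nat.lt_succ_of_lt μ.isLt⟩) = j := by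
          funext μ
          exact @Fin.snoc_castSucc s (fun i : Fin (s + 1) => Fin (n i.val)) k j μ
        have h2 : e (k, j) ⟨s, Nat.lt_succ_self s⟩ = k := by
          exact @Fin.snoc_last s (fun i : Fin (s + 1) => Fin (n i.val)) k j
        rw [h1, h2]
      calc ∑ k : Fin (n s),
            blockProd G (s + 1) (e (k, j)) * (blockProd G (s + 1) (e (k, j)))ᵀ
          = blockProd G s j * (∑ k : Fin (n s), G s k * (G s k)ᵀ) *
              (blockProd G s j)ᵀ := by
            rw [Matrix.mul_sum, Matrix.sum_mul]
            refine Finset.sum_congr rfl fun k _ => ?_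
            rw [hprod k, Matrix.transpose_mul]
            simp [Matrix.mul_assoc]
        _ = blockProd G s j * (blockProd G s j)ᵀ := by
            rw [h s (Nat.lt_succ_self s), Matrix.mul_one]
    exact (Finset.sum_congr rfl fun j _ => key j).trans
      (ih (fun μ hμ => h μ (Nat.lt_succ_of_lt hμ)))

/-- **Right orthogonality of Kronecker products.**
If each matrix block `G μ` (dimension `r μ × r (μ+1)`, length `n μ`, for `μ < m`) is
right orthogonal, i.e. `⟨G μ, (G μ)ᵀ⟩ = I`, and `r m = 1`, then the Kronecker product
`G₁ ⊗ … ⊗ G_m` is right orthogonal: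
`∑_{i₁,…,i_m} (G₁(i₁)⋯G_m(i_m)) (G₁(i₁)⋯G_m(i_m))ᵀ = I` (the `r 0 × r 0` identity). -/
theorem kroneckerProd_rightOrthogonal
    (m : ℕ) (r n : ℕ → ℕ) (hrm : r m = 1)
    (G : ∀ μ : ℕ, Fin (n μ) → Matrix (Fin (r μ)) (Fin (r (μ + 1))) ℝ)
    (horth : ∀ μ : ℕ, μ < m → ∑ j : Fin (n μ), G μ j * (G μ j)ᵀ = 1) :
    ∑ i : ((μ : Fin m) → Fin (n μ.val)),
      blockProd G m i * (blockProd G m i)ᵀ = 1 := by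
  exact blockProd_orth_aux G m horth
end

section
/- Let G₁, …, G_d be matrix blocks with G_μ of dimension r_{μ-1} × r_μ and length n_μ, r₀ = r_d = 1, and let h ∈ {1,…,d}. Suppose G_μ is left orthogonal (⟨G_μᵀ, G_μ⟩ = I) for all μ < h and right orthogonal (⟨G_μ, G_μᵀ⟩ = I) for all μ > h. Then the TT tensor A^G represented by G, with entries A^G_{i₁,…,i_d} = G₁(i₁)⋯G_d(i_d) (a 1×1 matrix identified with a real number), satisfies ‖A^G‖_F = ‖G_h‖, where ‖A^G‖_F² = ∑_{i₁,…,i_d} (A^G_{i₁,…,i_d})² and ‖G_h‖² = ∑_j ‖G_h(j)‖_F². -/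
open Matrix

/-- Key recursion: the Gram sum of `blockProd G (s+1)` in terms of that of `blockProd G s`. -/
lemma blockProd_gram_succ {r n : ℕ → ℕ}
    (G : ∀ μ : ℕ, Fin (n μ) → Matrix (Fin (r μ)) (Fin (r (μ + 1))) ℝ) (s : ℕ) :
    ∑ i : ((μ : Fin (s + 1)) → Fin (n μ.val)),
        (blockProd G (s + 1) i)ᵀ * blockProd G (s + 1) i
      = ∑ j : Fin (n s), (G s j)ᵀ *
          (∑ i : ((μ : Fin s) → Fin (n μ.val)),
            (blockProd G s i)ᵀ * blockProd G s i) * G s j := by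
  rw [← Equiv.sum_comp (Fin.snocEquiv (fun μ : Fin (s + 1) => Fin (n μ.val)))
    (fun i => (blockProd G (s + 1) i)ᵀ * blockProd G (s + 1) i)]
  rw [Fintype.sum_prod_type]
  refine Finset.sum_congr rfl fun j _ => ?_
  rw [Matrix.mul_sum, Matrix.sum_mul]
  refine Finset.sum_congr rfl fun f _ => ?_
  have h1 : blockProd G (s + 1) (Fin.snocEquiv (fun μ : Fin (s + 1) => Fin (n μ.val)) (j, f))
      = blockProd G s f * G s j := by
    simp only [blockProd, Fin.snocEquiv_apply]
    exact congrArg₂ (fun A B => A * B)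
      (congrArg (blockProd G s) (funext fun μ =>
        Fin.snoc_castSucc (α := fun μ : Fin (s + 1) => Fin (n μ.val)) (p := f) (x := j) (i := μ)))
      (congrArg (G s) (Fin.snoc_last (α := fun μ : Fin (s + 1) => Fin (n μ.val)) (p := f) (x := j)))
  rw [h1, Matrix.transpose_mul]
  simp only [Matrix.mul_assoc]

lemma sum_fin_one {m : ℕ} (hm : m = 1) (f : Fin m → ℝ) :
    ∑ x : Fin m, f x = f ⟨0, by omega⟩ := by
  subst hm
  exact Fin.sum_univ_one f

/-- **Frobenius norm of an `h`-orthogonal TT tensor.**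
Let `G μ` (for `μ < d`) be matrix blocks with `G μ` of dimension `r μ × r (μ+1)` and
length `n μ`, where `r 0 = r d = 1`.  Suppose the representation is `h`-orthogonal:
`G μ` is left orthogonal for `μ < h` and right orthogonal for `h < μ < d`.
Then the TT tensor `A^G` with entries `A^G_{i₁,…,i_d} = G₁(i₁)⋯G_d(i_d)` (a `1 × 1`
matrix identified with a real number) satisfies `‖A^G‖_F = ‖G_h‖`, i.e.
`√(∑_i (A^G_i)²) = √(∑_j ‖G_h(j)‖_F²)`. -/
theorem frobeniusNorm_TT_eq_norm_core
    (d : ℕ) (r n : ℕ → ℕ) (hr0 : r 0 = 1) (hrd : r d = 1)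
    (G : ∀ μ : ℕ, Fin (n μ) → Matrix (Fin (r μ)) (Fin (r (μ + 1))) ℝ)
    (h : ℕ) (hh : h < d)
    (hleft : ∀ μ : ℕ, μ < h → ∑ j : Fin (n μ), (G μ j)ᵀ * G μ j = 1)
    (hright : ∀ μ : ℕ, h < μ → μ < d → ∑ j : Fin (n μ), G μ j * (G μ j)ᵀ = 1) :
    Real.sqrt (∑ i : ((μ : Fin d) → Fin (n μ.val)),
        (blockProd G d i ⟨0, by omega⟩ ⟨0, by omega⟩) ^ 2)
      = Real.sqrt (∑ j : Fin (n h), ∑ a : Fin (r h), ∑ b : Fin (r (h + 1)),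
          (G h j a b) ^ 2) := by
  -- Gram sums up to h are identity
  have gramA : ∀ s : ℕ, s ≤ h →
      ∑ i : ((μ : Fin s) → Fin (n μ.val)), (blockProd G s i)ᵀ * blockProd G s i = 1 := by
    intro s
    induction s with
    | zero =>
      intro _
      have : ∀ i : ((μ : Fin 0) → Fin (n μ.val)), blockProd G 0 i = 1 := fun _ => rfl
      simp [this, Matrix.transpose_one]
    | succ s ih =>
      intro hs
      rw [blockProd_gram_succ, ih (by omega)]
      have := hleft s (by omega)
      simpa using this
  -- trace of Gram sums is constant from h+1 to d
  have traceT : ∀ s : ℕ, h < s → s ≤ d →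
      Matrix.trace (∑ i : ((μ : Fin s) → Fin (n μ.val)),
        (blockProd G s i)ᵀ * blockProd G s i)
      = ∑ j : Fin (n h), ∑ a : Fin (r h), ∑ b : Fin (r (h + 1)), (G h j a b) ^ 2 := by
    intro s
    induction s with
    | zero => omega
    | succ s ih =>
      intro hs hsd
      rw [blockProd_gram_succ]
      rcases Nat.lt_or_ge h s with hlt | hge
      · -- s > h : use right orthogonality and trace cyclicity
        have hP := ih hlt (by omega)
        calc Matrix.trace (∑ j : Fin (n s), (G s j)ᵀ *
              (∑ i : ((μ : Fin s) → Fin (n μ.val)),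
                (blockProd G s i)ᵀ * blockProd G s i) * G s j)
            = ∑ j : Fin (n s), Matrix.trace ((∑ i : ((μ : Fin s) → Fin (n μ.val)),
                (blockProd G s i)ᵀ * blockProd G s i) * (G s j * (G s j)ᵀ)) := by
              rw [Matrix.trace_sum]
              refine Finset.sum_congr rfl fun j _ => ?_
              rw [Matrix.mul_assoc, Matrix.trace_mul_comm, Matrix.mul_assoc]
          _ = Matrix.trace ((∑ i : ((μ : Fin s) → Fin (n μ.val)),
                (blockProd G s i)ᵀ * blockProd G s i) *
                (∑ j : Fin (n s), G s j * (G s j)ᵀ)) := by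
              rw [Finset.mul_sum, Matrix.trace_sum]
          _ = _ := by rw [hright s hlt (by omega), Matrix.mul_one, hP]
      · -- s = h : base case
        have hseq : s = h := by omega
        subst hseq
        rw [gramA s le_rfl]
        simp only [Matrix.mul_one, Matrix.trace_sum]
        refine Finset.sum_congr rfl fun j _ => ?_
        rw [Matrix.trace]
        simp only [Matrix.diag, Matrix.mul_apply, Matrix.transpose_apply]
        rw [Finset.sum_comm]
        refine Finset.sum_congr rfl fun a _ => ?_
        refine Finset.sum_congr rfl fun b _ => ?_
        ring
  have hd := traceT d (by omega) le_rfl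
  rw [← hd]
  congr 1
  rw [Matrix.trace_sum]
  refine Finset.sum_congr rfl fun i _ => ?_
  rw [Matrix.trace]
  simp only [Matrix.diag, Matrix.mul_apply, Matrix.transpose_apply]
  rw [sum_fin_one hrd, sum_fin_one hr0]
  ring
end

section
/- Let U ∈ ℝ^{p × a}, V ∈ ℝ^{b × q}, Z ∈ ℝ^{p × q}, G ∈ ℝ^{a × b} and α ∈ ℝ. Suppose G⁺ ∈ ℝ^{a × b} minimizes X ↦ ‖Z − U X V‖_F over all X ∈ ℝ^{a × b}. Set Z^α := α Z + (1−α) U G V and G^α := α G⁺ + (1−α) G. Then G^α minimizes X ↦ ‖Z^α − U X V‖_F over all X ∈ ℝ^{a × b}, i.e. for every X ∈ ℝ^{a × b}, ‖Z^α − U G^α V‖_F ≤ ‖Z^α − U X V‖_F. -/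
open Matrix

/-- The Frobenius norm of a real matrix. -/
noncomputable def frob {m n : ℕ} (X : Matrix (Fin m) (Fin n) ℝ) : ℝ :=
  Real.sqrt (∑ i, ∑ j, (X i j) ^ 2)

lemma frob_nonneg {m n : ℕ} (X : Matrix (Fin m) (Fin n) ℝ) : 0 ≤ frob X :=
  Real.sqrt_nonneg _

lemma frob_smul {m n : ℕ} (c : ℝ) (X : Matrix (Fin m) (Fin n) ℝ) :
    frob (c • X) = |c| * frob X := by
  unfold frob
  rw [← Real.sqrt_sq_eq_abs, ← Real.sqrt_mul (sq_nonneg c), Finset.mul_sum]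
  congr 1
  refine Finset.sum_congr rfl fun i _ => ?_
  rw [Finset.mul_sum]
  refine Finset.sum_congr rfl fun j _ => ?_
  simp [mul_pow]

/-- **Overrelaxation lemma for the ADF algorithm (matrix form).**
If `G⁺` minimizes `X ↦ ‖Z − U X V‖_F`, then for any `α ∈ ℝ` the overrelaxed block
`G^α := α G⁺ + (1−α) G` minimizes `X ↦ ‖Z^α − U X V‖_F`, where
`Z^α := α Z + (1−α) U G V`. -/
theorem overrelaxed_argmin
    (p a b q : ℕ)
    (U : Matrix (Fin p) (Fin a) ℝ) (V : Matrix (Fin b) (Fin q) ℝ)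
    (Z : Matrix (Fin p) (Fin q) ℝ)
    (G Gplus : Matrix (Fin a) (Fin b) ℝ) (α : ℝ)
    (hGplus : ∀ X : Matrix (Fin a) (Fin b) ℝ,
      frob (Z - U * Gplus * V) ≤ frob (Z - U * X * V)) :
    ∀ X : Matrix (Fin a) (Fin b) ℝ,
      frob ((α • Z + (1 - α) • (U * G * V)) - U * (α • Gplus + (1 - α) • G) * V)
        ≤ frob ((α • Z + (1 - α) • (U * G * V)) - U * X * V) := by
  intro X
  have hL : (α • Z + (1 - α) • (U * G * V)) - U * (α • Gplus + (1 - α) • G) * V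
      = α • (Z - U * Gplus * V) := by
    simp only [Matrix.add_mul, Matrix.mul_add, Matrix.smul_mul, Matrix.mul_smul,
      smul_sub]
    abel
  rcases eq_or_ne α 0 with hα | hα
  · rw [hL, hα, zero_smul]
    calc frob (0 : Matrix (Fin p) (Fin q) ℝ) = 0 := by simp [frob]
    _ ≤ _ := frob_nonneg _
  · set Y : Matrix (Fin a) (Fin b) ℝ := α⁻¹ • (X - (1 - α) • G) with hY
    have hX : X = α • Y + (1 - α) • G := by
      rw [hY, smul_smul, mul_inv_cancel₀ hα, one_smul]
      abel
    have hR : (α • Z + (1 - α) • (U * G * V)) - U * X * V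
        = α • (Z - U * Y * V) := by
      rw [hX]
      simp only [Matrix.add_mul, Matrix.mul_add, Matrix.smul_mul, Matrix.mul_smul,
        smul_sub]
      abel
    rw [hL, hR, frob_smul, frob_smul]
    exact mul_le_mul_of_nonneg_left (hGplus Y) (abs_nonneg α)
end

section
/- Let A ∈ ℝ^{p × a} have orthonormal columns (Aᵀ A = I) and B ∈ ℝ^{b × q} have orthonormal rows (B Bᵀ = I). Let P be a set of index pairs in {1,…,p} × {1,…,q}, and let S ∈ ℝ^{p × q} be supported on P, i.e. S|_P = S. Set N := Aᵀ S Bᵀ and Q := (A N B)|_P, and assume Q ≠ 0. Then the overrelaxation parameter α* := ‖N‖_F² / ‖Q‖_F² minimizes α ↦ ‖S − α Q‖_F over α ∈ ℝ, i.e. for every α ∈ ℝ, ‖S − α* Q‖_F ≤ ‖S − α Q‖_F. -/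
open Matrix

/-- The restriction `X|_P` of a matrix to a set `P` of index pairs:
entries outside `P` are set to zero. -/
def restrict {p q : ℕ} (P : Finset (Fin p × Fin q))
    (X : Matrix (Fin p) (Fin q) ℝ) : Matrix (Fin p) (Fin q) ℝ :=
  Matrix.of fun i j => if (i, j) ∈ P then X i j else 0

private lemma inner_eq_trace {m n : ℕ} (X Y : Matrix (Fin m) (Fin n) ℝ) :
    ∑ i, ∑ j, X i j * Y i j = trace (Xᵀ * Y) := by
  rw [Finset.sum_comm]
  simp [trace, Matrix.mul_apply, Matrix.diag]

/-- **Optimal acceleration parameter (Lemma "Optimal acceleration").**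
Let `A` have orthonormal columns, `B` orthonormal rows, and let `S` be supported on the
sampling set `P` (`S|_P = S`).  With `N := Aᵀ * S * Bᵀ` and `Q := (A N B)|_P ≠ 0`, the
overrelaxation parameter `α* := ‖N‖_F² / ‖Q‖_F²` minimizes `α ↦ ‖S − α Q‖_F`. -/
theorem optimal_acceleration
    (p a b q : ℕ)
    (A : Matrix (Fin p) (Fin a) ℝ) (B : Matrix (Fin b) (Fin q) ℝ)
    (hA : Aᵀ * A = 1) (hB : B * Bᵀ = 1)
    (P : Finset (Fin p × Fin q))
    (S : Matrix (Fin p) (Fin q) ℝ) (hS : restrict P S = S)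
    (N : Matrix (Fin a) (Fin b) ℝ) (hN : N = Aᵀ * S * Bᵀ)
    (Q : Matrix (Fin p) (Fin q) ℝ) (hQdef : Q = restrict P (A * N * B))
    (hQ : Q ≠ 0)
    (αstar : ℝ) (hα : αstar = (∑ i, ∑ j, (N i j) ^ 2) / (∑ i, ∑ j, (Q i j) ^ 2)) :
    ∀ α : ℝ, frob (S - αstar • Q) ≤ frob (S - α • Q) := by
  intro α
  set SS : ℝ := ∑ i, ∑ j, (S i j) ^ 2 with hSS
  set QQ : ℝ := ∑ i, ∑ j, (Q i j) ^ 2 with hQQ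
  set T : ℝ := ∑ i, ∑ j, S i j * Q i j with hT
  -- S vanishes off P
  have hSoff : ∀ i j, (i, j) ∉ P → S i j = 0 := by
    intro i j hij
    have := congrArg (fun X => X i j) hS
    simpa [restrict, hij] using this.symm
  -- key: T = ‖N‖²
  have hTN : T = ∑ i, ∑ j, (N i j) ^ 2 := by
    have h1 : T = ∑ i, ∑ j, S i j * (A * N * B) i j := by
      rw [hT]
      refine Finset.sum_congr rfl fun i _ => Finset.sum_congr rfl fun j _ => ?_
      by_cases hij : (i, j) ∈ P
      · simp [hQdef, restrict, hij]
      · simp [hSoff i j hij]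
    have h2 : ∑ i, ∑ j, (N i j) ^ 2 = ∑ i, ∑ j, N i j * N i j := by
      simp [sq]
    rw [h1, h2, inner_eq_trace, inner_eq_trace]
    have hNt : Nᵀ = B * Sᵀ * A := by
      rw [hN]; simp [Matrix.transpose_mul, Matrix.mul_assoc]
    rw [show Sᵀ * (A * N * B) = (Sᵀ * A * N) * B from by simp [Matrix.mul_assoc],
      Matrix.trace_mul_comm, hNt, ← Matrix.mul_assoc, ← Matrix.mul_assoc]
  -- QQ > 0
  have hQQpos : 0 < QQ := by
    rcases lt_or_eq_of_le (Finset.sum_nonneg fun i _ =>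
        Finset.sum_nonneg fun j _ => sq_nonneg (Q i j)) with h | h
    · exact h
    · exfalso
      apply hQ
      ext i j
      have h1 := (Finset.sum_eq_zero_iff_of_nonneg fun i _ =>
        Finset.sum_nonneg fun j _ => sq_nonneg (Q i j)).mp h.symm i (Finset.mem_univ i)
      have h2 := (Finset.sum_eq_zero_iff_of_nonneg fun j _ => sq_nonneg (Q i j)).mp h1 j
        (Finset.mem_univ j)
      simpa using pow_eq_zero_iff (n := 2) (by norm_num) |>.mp h2
  have hTα : T = αstar * QQ := by
    rw [hα, ← hTN]
    field_simp
  -- expansion of the objective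
  have hexp : ∀ β : ℝ, (∑ i, ∑ j, ((S - β • Q) i j) ^ 2) = SS - 2 * β * T + β ^ 2 * QQ := by
    intro β
    have : (∑ i, ∑ j, ((S - β • Q) i j) ^ 2)
        = ∑ i, ∑ j, ((S i j) ^ 2 - 2 * β * (S i j * Q i j) + β ^ 2 * (Q i j) ^ 2) := by
      refine Finset.sum_congr rfl fun i _ => Finset.sum_congr rfl fun j _ => ?_
      simp [Matrix.sub_apply, Matrix.smul_apply]
      ring
    rw [this]
    simp only [Finset.sum_add_distrib, Finset.sum_sub_distrib, ← Finset.mul_sum]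
    rfl
  have key : SS - 2 * α * T + α ^ 2 * QQ - (SS - 2 * αstar * T + αstar ^ 2 * QQ)
      = QQ * (α - αstar) ^ 2 := by
    rw [hTα]; ring
  unfold frob
  apply Real.sqrt_le_sqrt
  rw [hexp, hexp]
  nlinarith [mul_nonneg hQQpos.le (sq_nonneg (α - αstar))]
end

section
/- Let A ∈ ℝ^{p × a} have orthonormal columns (Aᵀ A = I) and B ∈ ℝ^{b × q} have orthonormal rows (B Bᵀ = I). Let P be a set of index pairs in {1,…,p} × {1,…,q}, and let S ∈ ℝ^{p × q} be supported on P, i.e. S|_P = S. Set N := Aᵀ S Bᵀ and Q := (A N B)|_P, assume Q ≠ 0, and let α* := ‖N‖_F² / ‖Q‖_F². Then the decrease of the squared residual under the optimally overrelaxed update equals α*‖N‖_F²: ‖S‖_F² − ‖S − α* Q‖_F² = α* · ‖N‖_F². -/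
open Matrix

lemma sum_sq_as_trace {m n : ℕ} (X : Matrix (Fin m) (Fin n) ℝ) (Y : Matrix (Fin m) (Fin n) ℝ) :
    (∑ i, ∑ j, X i j * Y i j) = Matrix.trace (X * Yᵀ) := by
  simp [Matrix.trace, Matrix.mul_apply, Matrix.diag]

/-- **Residual decrease under the optimally overrelaxed update.**
Let `A` have orthonormal columns, `B` orthonormal rows, and let `S` be supported on the
sampling set `P` (`S|_P = S`).  With `N := Aᵀ S Bᵀ`, `Q := (A N B)|_P ≠ 0` and
`α* := ‖N‖_F² / ‖Q‖_F²`, the decrease of the squared residual is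
`‖S‖_F² − ‖S − α* Q‖_F² = α* ‖N‖_F²`. -/
theorem residual_decrease_optimal_acceleration
    (p a b q : ℕ)
    (A : Matrix (Fin p) (Fin a) ℝ) (B : Matrix (Fin b) (Fin q) ℝ)
    (hA : Aᵀ * A = 1) (hB : B * Bᵀ = 1)
    (P : Finset (Fin p × Fin q))
    (S : Matrix (Fin p) (Fin q) ℝ) (hS : restrict P S = S)
    (N : Matrix (Fin a) (Fin b) ℝ) (hN : N = Aᵀ * S * Bᵀ)
    (Q : Matrix (Fin p) (Fin q) ℝ) (hQdef : Q = restrict P (A * N * B))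
    (hQ : Q ≠ 0)
    (αstar : ℝ) (hα : αstar = (∑ i, ∑ j, (N i j) ^ 2) / (∑ i, ∑ j, (Q i j) ^ 2)) :
    (∑ i, ∑ j, (S i j) ^ 2) - (∑ i, ∑ j, ((S - αstar • Q) i j) ^ 2)
      = αstar * (∑ i, ∑ j, (N i j) ^ 2) := by
  -- S vanishes off P
  have hS0 : ∀ i j, (i, j) ∉ P → S i j = 0 := by
    intro i j h
    have := congrFun (congrFun hS i) j
    simpa [restrict, h] using this.symm
  -- ⟨S, Q⟩ = ⟨S, A*N*B⟩
  have hSQ : (∑ i, ∑ j, S i j * Q i j) = (∑ i, ∑ j, S i j * (A * N * B) i j) := by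
    apply Finset.sum_congr rfl; intro i _
    apply Finset.sum_congr rfl; intro j _
    by_cases h : (i, j) ∈ P
    · simp [hQdef, restrict, h]
    · simp [hS0 i j h]
  -- ⟨S, A*N*B⟩ = ‖N‖²
  have key : (∑ i, ∑ j, S i j * Q i j) = (∑ i, ∑ j, (N i j) ^ 2) := by
    rw [hSQ, sum_sq_as_trace]
    have : S * (A * N * B)ᵀ = S * Bᵀ * Nᵀ * Aᵀ := by
      simp [Matrix.transpose_mul, Matrix.mul_assoc]
    rw [this]
    have : Matrix.trace (S * Bᵀ * Nᵀ * Aᵀ) = Matrix.trace (Aᵀ * (S * Bᵀ * Nᵀ)) := by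
      rw [Matrix.trace_mul_comm]
    rw [this]
    have hNN : Aᵀ * (S * Bᵀ * Nᵀ) = N * Nᵀ := by
      rw [hN]; simp [Matrix.mul_assoc]
    rw [hNN, ← sum_sq_as_trace]
    apply Finset.sum_congr rfl; intro i _
    apply Finset.sum_congr rfl; intro j _
    ring
  -- ‖Q‖² ≠ 0
  have hQsum : (∑ i, ∑ j, (Q i j) ^ 2) ≠ 0 := by
    intro h
    apply hQ
    ext i j
    have hnn : ∀ x ∈ Finset.univ, (0:ℝ) ≤ ∑ j, (Q x j) ^ 2 := by
      intro x _; positivity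
    have h1 : ∀ x ∈ Finset.univ, (∑ j, (Q x j) ^ 2) = 0 :=
      (Finset.sum_eq_zero_iff_of_nonneg hnn).mp h
    have hnn2 : ∀ y ∈ Finset.univ, (0:ℝ) ≤ (Q i y) ^ 2 := by
      intro y _; positivity
    have h2 := (Finset.sum_eq_zero_iff_of_nonneg hnn2).mp (h1 i (Finset.mem_univ i)) j
      (Finset.mem_univ j)
    have := pow_eq_zero_iff (n := 2) (by norm_num) |>.mp h2
    simpa using this
  have hαQ : αstar * (∑ i, ∑ j, (Q i j) ^ 2) = (∑ i, ∑ j, (N i j) ^ 2) := by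
    rw [hα, div_mul_cancel₀ _ hQsum]
  -- expand
  have expand : (∑ i, ∑ j, ((S - αstar • Q) i j) ^ 2)
      = (∑ i, ∑ j, (S i j) ^ 2) - 2 * αstar * (∑ i, ∑ j, S i j * Q i j)
        + αstar ^ 2 * (∑ i, ∑ j, (Q i j) ^ 2) := by
    have hpt : ∀ i j, ((S - αstar • Q) i j) ^ 2
        = (S i j) ^ 2 - 2 * αstar * (S i j * Q i j) + αstar ^ 2 * (Q i j) ^ 2 := by
      intro i j
      simp only [Matrix.sub_apply, Matrix.smul_apply, smul_eq_mul]
      ring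
    simp only [hpt, Finset.sum_add_distrib, Finset.sum_sub_distrib, ← Finset.mul_sum]
  rw [expand, key]
  have : αstar ^ 2 * (∑ i, ∑ j, (Q i j) ^ 2) = αstar * (∑ i, ∑ j, (N i j) ^ 2) := by
    rw [pow_two, mul_assoc, hαQ]
  rw [this]
  ring
end
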